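/- Let Σ be a positive continuous linear operator on H with Σ ≼ I, and let M ≥ 1 and m ≥ 0 be natural numbers. Then ∑_{i=1}^∞ ⟨e_i, (I − (I − Σ)^M) e_i⟩ ≤ m + M · ∑_{i=m+1}^∞ ⟨e_i, Σ e_i⟩, where both sums have nonnegative terms (and are interpreted in [0, ∞]). -/

import Mathlib

open MeasureTheory RealInnerProductSpace
open scoped ENNReal


section Aux
variable {E : Type*} [NormedAddCommGroup E] [InnerProductSpace ℝ E] [CompleteSpace E]

lemma my_inner_nonneg {T : E →L[ℝ] E} (hT : T.IsPositive) (x : E) :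
    (0:ℝ) ≤ ⟪x, T x⟫ := by
  have := hT.inner_nonneg_right x
  simpa using this

lemma my_symm {T : E →L[ℝ] E} (hT : IsSelfAdjoint T) (x y : E) :
    ⟪T x, y⟫ = ⟪x, T y⟫ :=
  (ContinuousLinearMap.isSelfAdjoint_iff_isSymmetric.mp hT) x y

lemma isPositive_pow {A : E →L[ℝ] E} (hA : A.IsPositive) (n : ℕ) :
    (A ^ n).IsPositive := by
  refine ContinuousLinearMap.isPositive_def'.mpr ⟨hA.isSelfAdjoint.pow n, fun x => ?_⟩
  rw [ContinuousLinearMap.reApplyInnerSelf_apply]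
  simp only [RCLike.re_to_real]
  rcases Nat.even_or_odd n with ⟨k, hk⟩ | ⟨k, hk⟩
  · subst hk
    have h1 : (A ^ (k + k)) x = (A ^ k) ((A ^ k) x) := by
      rw [pow_add]; rfl
    rw [h1, my_symm (hA.isSelfAdjoint.pow k)]
    exact real_inner_self_nonneg
  · subst hk
    have h1 : (A ^ (2 * k + 1)) x = (A ^ k) (A ((A ^ k) x)) := by
      have : A ^ (2 * k + 1) = A ^ k * A * A ^ k := by rw [show 2*k+1 = (k+1)+k by ring, pow_add, pow_succ]
      rw [this]; rfl
    rw [h1, my_symm (hA.isSelfAdjoint.pow k)]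
    have := my_inner_nonneg hA ((A ^ k) x)
    simpa [real_inner_comm] using this

lemma term_mono {A Cov : E →L[ℝ] E} (hA : A.IsPositive) (hCov : Cov.IsPositive)
    (hAC : Cov = 1 - A) (x : E) (k : ℕ) :
    ⟪x, (A ^ k) (Cov x)⟫ ≤ ⟪x, Cov x⟫ := by
  induction k with
  | zero => simp
  | succ k ih =>
    refine le_trans ?_ ih
    have hdiff : A ^ k - A ^ (k + 1) = Cov * A ^ k := by
      rw [hAC, sub_mul, one_mul, ← pow_succ']
    have key : ⟪x, (A ^ k) (Cov x)⟫ - ⟪x, (A ^ (k + 1)) (Cov x)⟫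
        = ⟪Cov x, (A ^ k) (Cov x)⟫ := by
      have h1 : (A ^ k) (Cov x) - (A ^ (k + 1)) (Cov x) = Cov ((A ^ k) (Cov x)) := by
        calc (A ^ k) (Cov x) - (A ^ (k + 1)) (Cov x)
            = (A ^ k - A ^ (k + 1)) (Cov x) := by
              rw [ContinuousLinearMap.sub_apply]
          _ = (Cov * A ^ k) (Cov x) := by rw [hdiff]
          _ = Cov ((A ^ k) (Cov x)) := rfl
      rw [← inner_sub_right, h1, ← my_symm hCov.isSelfAdjoint]
    have h0 : 0 ≤ ⟪Cov x, (A ^ k) (Cov x)⟫ := my_inner_nonneg (isPositive_pow hA k) _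
    linarith

lemma key_le_M {A Cov : E →L[ℝ] E} (hA : A.IsPositive) (hCov : Cov.IsPositive)
    (hAC : Cov = 1 - A) (M : ℕ) (x : E) :
    ⟪x, (1 - A ^ M) x⟫ ≤ (M : ℝ) * ⟪x, Cov x⟫ := by
  have hfact : (1 : E →L[ℝ] E) - A ^ M = (∑ k ∈ Finset.range M, A ^ k) * Cov := by
    rw [hAC, ← neg_sub A 1, mul_neg, geom_sum_mul, neg_sub]
  have happ : ((1 : E →L[ℝ] E) - A ^ M) x = ∑ k ∈ Finset.range M, (A ^ k) (Cov x) := by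
    rw [hfact, ContinuousLinearMap.mul_apply, ContinuousLinearMap.sum_apply]
  rw [happ, inner_sum]
  calc ∑ k ∈ Finset.range M, ⟪x, (A ^ k) (Cov x)⟫
      ≤ ∑ _k ∈ Finset.range M, ⟪x, Cov x⟫ :=
        Finset.sum_le_sum fun k _ => term_mono hA hCov hAC x k
    _ = (M : ℝ) * ⟪x, Cov x⟫ := by
        rw [Finset.sum_const, Finset.card_range, nsmul_eq_mul]

lemma key_le_normsq {A : E →L[ℝ] E} (hA : A.IsPositive) (M : ℕ) (x : E) :
    ⟪x, (1 - A ^ M) x⟫ ≤ ‖x‖ ^ 2 := by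
  have h1 : ⟪x, (1 - A ^ M) x⟫ = ⟪x, x⟫ - ⟪x, (A ^ M) x⟫ := by
    rw [ContinuousLinearMap.sub_apply, inner_sub_right]; simp
  have h0 : 0 ≤ ⟪x, (A ^ M) x⟫ := my_inner_nonneg (isPositive_pow hA M) x
  have := real_inner_self_eq_norm_sq x
  linarith


end Aux

/-- `Hl2` is the real Hilbert space `ℓ²` of square-summable real sequences. -/
noncomputable abbrev Hl2 : Type := lp (fun _ : ℕ => ℝ) 2

/-- `e i` is the `i`-th canonical basis vector of `ℓ²` (indexed from `0`). -/
noncomputable def e (i : ℕ) : Hl2 := lp.single 2 i 1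

lemma norm_e (i : ℕ) : ‖e i‖ = 1 := by
  have := lp.norm_single (p := 2) (E := fun _ : ℕ => ℝ) (by norm_num) i (1 : ℝ)
  simpa [e] using this

set_option maxHeartbeats 1000000 in
/-- **Effective dimension bound (deterministic core of Lemma 1).**
Let `Cov` be a positive continuous linear operator on `ℓ²` with `Cov ≼ I`, and let
`M ≥ 1`, `m ≥ 0` be natural numbers. Then the trace
`∑_{i} ⟪e i, (I - (I - Cov) ^ M) (e i)⟫` is at most
`m + M * ∑_{i ≥ m} ⟪e i, Cov (e i)⟫`, where all terms are nonnegative and the sums are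
interpreted in `[0, ∞]` (the tail sum skips the first `m` basis vectors). -/
theorem trace_effective_dimension_bound
    (Cov : Hl2 →L[ℝ] Hl2) (hpos : Cov.IsPositive) (hle : (1 - Cov).IsPositive)
    (M : ℕ) (hM : 1 ≤ M) (m : ℕ) :
    ∑' i : ℕ, ENNReal.ofReal ⟪e i, (1 - (1 - Cov) ^ M) (e i)⟫ ≤
      (m : ℝ≥0∞) + (M : ℝ≥0∞) * ∑' i : ℕ, ENNReal.ofReal ⟪e (m + i), Cov (e (m + i))⟫ := by
  have hAC : Cov = 1 - (1 - Cov) := by abel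
  set A : Hl2 →L[ℝ] Hl2 := 1 - Cov with hAdef
  have hterm_nonneg : ∀ x : Hl2, (0:ℝ) ≤ ⟪x, Cov x⟫ := my_inner_nonneg hpos
  have hf_le_one : ∀ i : ℕ, ENNReal.ofReal ⟪e i, (1 - A ^ M) (e i)⟫ ≤ 1 := by
    intro i
    rw [ENNReal.ofReal_le_one]
    have := key_le_normsq hle M (e i)
    rwa [norm_e, one_pow] at this
  have hf_le : ∀ i : ℕ, ENNReal.ofReal ⟪e i, (1 - A ^ M) (e i)⟫ ≤
      (M : ℝ≥0∞) * ENNReal.ofReal ⟪e i, Cov (e i)⟫ := by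
    intro i
    calc ENNReal.ofReal ⟪e i, (1 - A ^ M) (e i)⟫
        ≤ ENNReal.ofReal ((M : ℝ) * ⟪e i, Cov (e i)⟫) :=
          ENNReal.ofReal_le_ofReal (key_le_M hle hpos hAC M (e i))
      _ = (M : ℝ≥0∞) * ENNReal.ofReal ⟪e i, Cov (e i)⟫ := by
          rw [ENNReal.ofReal_mul (by positivity), ENNReal.ofReal_natCast]
  rw [← Summable.sum_add_tsum_nat_add' (f := fun i => ENNReal.ofReal ⟪e i, (1 - A ^ M) (e i)⟫)
    (k := m) ENNReal.summable]
  gcongr ?_ + ?_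
  · calc ∑ i ∈ Finset.range m, ENNReal.ofReal ⟪e i, (1 - A ^ M) (e i)⟫
        ≤ ∑ _i ∈ Finset.range m, (1 : ℝ≥0∞) := Finset.sum_le_sum fun i _ => hf_le_one i
      _ = (m : ℝ≥0∞) := by simp
  · calc ∑' i : ℕ, ENNReal.ofReal ⟪e (i + m), (1 - A ^ M) (e (i + m))⟫
        ≤ ∑' i : ℕ, (M : ℝ≥0∞) * ENNReal.ofReal ⟪e (m + i), Cov (e (m + i))⟫ := by
          refine ENNReal.tsum_le_tsum fun i => ?_
          rw [add_comm m i]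
          exact hf_le (i + m)
      _ = (M : ℝ≥0∞) * ∑' i : ℕ, ENNReal.ofReal ⟪e (m + i), Cov (e (m + i))⟫ :=
          ENNReal.tsum_mul_left
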